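/- arXiv:1910.04194 — 2 statements merged into one kernel-verified Lean document; each statement's English description precedes it below -/
import Mathlib

section
/- Let A₁, …, Aₙ be d×d real symmetric positive definite matrices. The function F defined on the convex set of d×d real symmetric positive definite matrices by F(X) = ∑_{i=1}^n [ tr(Aᵢ ⊗ Aᵢ) + tr(X ⊗ X) − 2 tr( ( (Aᵢ ⊗ Aᵢ)^{1/2} (X ⊗ X) (Aᵢ ⊗ Aᵢ)^{1/2} )^{1/2} ) ] is convex. -/
open Matrix
open scoped Kronecker

/-- The (unique) positive semidefinite square root of a positive semidefinite real matrix,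
extended by zero to arbitrary matrices. -/
noncomputable def msqrt {n : Type*} [Fintype n] [DecidableEq n]
    (M : Matrix n n ℝ) : Matrix n n ℝ :=
  @dite _ (M.PosSemidef) (Classical.dec _) (fun h => (h.1.eigenvectorUnitary : Matrix n n ℝ) *
    diagonal ((↑) ∘ (√·) ∘ h.1.eigenvalues) * (star (h.1.eigenvectorUnitary : Matrix n n ℝ))) (fun _ => 0)

section Aux

set_option linter.unusedSectionVars false

variable {n : Type*} [Fintype n] [DecidableEq n]

open scoped MatrixOrder

lemma msqrt_eq {M : Matrix n n ℝ} (hM : M.PosSemidef) : msqrt M = CFC.sqrt M := by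
  rw [CFC.sqrt_eq_cfc, cfc_nnreal_eq_real _ M hM.nonneg, hM.1.cfc_eq, msqrt, dif_pos hM]
  simp only [IsHermitian.cfc, Unitary.conjStarAlgAut_apply]
  congr 3
  ext i
  simp [Real.coe_sqrt, Real.coe_toNNReal', max_eq_left (hM.eigenvalues_nonneg i)]

lemma msqrt_posSemidef {M : Matrix n n ℝ} (hM : M.PosSemidef) : (msqrt M).PosSemidef := by
  rw [msqrt_eq hM]; exact (CFC.sqrt_nonneg M).posSemidef

lemma msqrt_mul_self {M : Matrix n n ℝ} (hM : M.PosSemidef) : msqrt M * msqrt M = M := by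
  rw [msqrt_eq hM]; exact CFC.sqrt_mul_sqrt_self M hM.nonneg

lemma posSemidef_kron {m : Type*} [Fintype m] [DecidableEq m]
    {M : Matrix n n ℝ} {N : Matrix m m ℝ}
    (hM : M.PosSemidef) (hN : N.PosSemidef) : (M ⊗ₖ N).PosSemidef := by
  obtain ⟨B, rfl⟩ := CStarAlgebra.nonneg_iff_eq_star_mul_self.mp hM.nonneg
  obtain ⟨C, rfl⟩ := CStarAlgebra.nonneg_iff_eq_star_mul_self.mp hN.nonneg
  have h : (Bᴴ * B) ⊗ₖ (Cᴴ * C) = (B ⊗ₖ C)ᴴ * (B ⊗ₖ C) := by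
    rw [mul_kronecker_mul]
    congr 1
  rw [star_eq_conjTranspose, star_eq_conjTranspose, h]
  exact posSemidef_conjTranspose_mul_self _

lemma msqrt_kron {M : Matrix n n ℝ} (hM : M.PosSemidef) :
    msqrt (M ⊗ₖ M) = msqrt M ⊗ₖ msqrt M := by
  have h1 : (M ⊗ₖ M).PosSemidef := posSemidef_kron hM hM
  have h2 : (msqrt M ⊗ₖ msqrt M) ^ 2 = M ⊗ₖ M := by
    rw [pow_two, ← mul_kronecker_mul, msqrt_mul_self hM]
  rw [msqrt_eq h1]
  exact (CFC.sqrt_eq_iff _ _ h1.nonneg (posSemidef_kron (msqrt_posSemidef hM) (msqrt_posSemidef hM)).nonneg).mpr (by rw [← h2, sq])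

lemma dotProduct_self_pos {v : n → ℝ} (hv : v ≠ 0) : 0 < dotProduct v v := by
  rcases lt_or_eq_of_le (Finset.sum_nonneg fun i _ => mul_self_nonneg (v i) :
      (0:ℝ) ≤ dotProduct v v) with h | h
  · exact h
  · exact absurd (dotProduct_self_eq_zero.mp h.symm) hv

lemma mulVec_ne_zero {B : Matrix n n ℝ} (h : IsUnit B.det) {x : n → ℝ} (hx : x ≠ 0) :
    B *ᵥ x ≠ 0 := by
  intro h0
  apply hx
  have := congrArg (fun v => B⁻¹ *ᵥ v) h0
  simpa [mulVec_mulVec, nonsing_inv_mul _ h] using this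

lemma posDef_of_posSemidef_isUnit {M : Matrix n n ℝ} (hM : M.PosSemidef)
    (h : IsUnit M.det) : M.PosDef := by
  obtain ⟨B, hB⟩ := CStarAlgebra.nonneg_iff_eq_star_mul_self.mp hM.nonneg
  refine PosDef.of_dotProduct_mulVec_pos hM.1 fun x hx => ?_
  have hBx : B *ᵥ x ≠ 0 := by
    intro h0
    apply mulVec_ne_zero h hx
    rw [hB, ← mulVec_mulVec, h0, mulVec_zero]
  have : dotProduct (star x) (M *ᵥ x) = dotProduct (B *ᵥ x) (B *ᵥ x) := by
    rw [hB, star_eq_conjTranspose, conjTranspose_eq_transpose_of_trivial, ← mulVec_mulVec, dotProduct_mulVec,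
      star_trivial, vecMul_transpose]
  rw [this]
  exact dotProduct_self_pos hBx

lemma msqrt_posDef {M : Matrix n n ℝ} (hM : M.PosDef) : (msqrt M).PosDef := by
  refine posDef_of_posSemidef_isUnit (msqrt_posSemidef hM.posSemidef) ?_
  rw [isUnit_iff_ne_zero]
  intro h0
  have := hM.det_pos
  rw [← msqrt_mul_self hM.posSemidef, det_mul, h0, mul_zero] at this
  exact lt_irrefl _ this

lemma transpose_eq_of_hermitian {M : Matrix n n ℝ} (hM : M.IsHermitian) : Mᵀ = M := by
  rw [← conjTranspose_eq_transpose_of_trivial]; exact hM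

lemma posDef_conj {B X : Matrix n n ℝ} (hB : B.PosDef) (hX : X.PosDef) :
    (B * X * B).PosDef := by
  have hBt : Bᵀ = B := transpose_eq_of_hermitian hB.1
  refine PosDef.of_dotProduct_mulVec_pos ?_ fun x hx => ?_
  · show (B * X * B)ᴴ = B * X * B
    rw [conjTranspose_mul, conjTranspose_mul, hB.1, hX.1, mul_assoc]
  · have hy : B *ᵥ x ≠ 0 := mulVec_ne_zero (isUnit_iff_ne_zero.mpr hB.det_pos.ne') hx
    have hv : x ᵥ* B = B *ᵥ x := by rw [← vecMul_transpose, hBt]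
    have h2 := hX.dotProduct_mulVec_pos hy
    rw [star_trivial] at h2 ⊢
    rw [← mulVec_mulVec, ← mulVec_mulVec, dotProduct_mulVec, hv]
    exact h2

lemma posSemidef_smul' {M : Matrix n n ℝ} (hM : M.PosSemidef) {c : ℝ} (hc : 0 ≤ c) :
    (c • M).PosSemidef := by
  refine PosSemidef.of_dotProduct_mulVec_nonneg ?_ fun x => ?_
  · show (c • M)ᴴ = c • M
    rw [conjTranspose_smul, hM.1]; simp
  · rw [smul_mulVec, dotProduct_smul]
    exact mul_nonneg hc (hM.dotProduct_mulVec_nonneg x)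

lemma posDef_smul' {M : Matrix n n ℝ} (hM : M.PosDef) {c : ℝ} (hc : 0 < c) :
    (c • M).PosDef := by
  refine PosDef.of_dotProduct_mulVec_pos ?_ fun x hx => ?_
  · show (c • M)ᴴ = c • M
    rw [conjTranspose_smul, hM.1]; simp
  · rw [smul_mulVec, dotProduct_smul]
    exact mul_pos hc (hM.dotProduct_mulVec_pos hx)

lemma posDef_combo {X Y : Matrix n n ℝ} (hX : X.PosDef) (hY : Y.PosDef) {a b : ℝ}
    (ha : 0 ≤ a) (hb : 0 ≤ b) (hab : a + b = 1) : (a • X + b • Y).PosDef := by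
  rcases ha.eq_or_lt with h | h
  · have hb1 : b = 1 := by linarith
    simpa [← h, hb1] using hY
  · exact (posDef_smul' hX h).add_posSemidef (posSemidef_smul' hY.posSemidef hb)

lemma posSemidef_trace_nonneg {M : Matrix n n ℝ} (hM : M.PosSemidef) : 0 ≤ M.trace := by
  have h : ∀ i, 0 ≤ M i i := by
    intro i
    have := hM.dotProduct_mulVec_nonneg (Pi.single i 1)
    simpa [dotProduct, Pi.single_apply, mulVec, Finset.sum_ite_eq] using this
  exact Finset.sum_nonneg fun i _ => h i

/-- Cauchy–Schwarz for the Frobenius inner product. -/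
lemma trace_mul_sq_le (P Q : Matrix n n ℝ) :
    (P * Q).trace ^ 2 ≤ (P * Pᵀ).trace * (Qᵀ * Q).trace := by
  have h1 : (P * Q).trace = ∑ p : n × n, P p.1 p.2 * Q p.2 p.1 := by
    simp only [Fintype.sum_prod_type]
    simp [trace, diag, mul_apply]
  have h2 : (P * Pᵀ).trace = ∑ p : n × n, (P p.1 p.2) ^ 2 := by
    simp only [Fintype.sum_prod_type]
    simp [trace, diag, mul_apply, sq]
  have h3 : (Qᵀ * Q).trace = ∑ p : n × n, (Q p.2 p.1) ^ 2 := by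
    simp only [Fintype.sum_prod_type]
    simp [trace, diag, mul_apply, sq]
  rw [h1, h2, h3]
  exact Finset.sum_mul_sq_le_sq_mul_sq _ _ _

/-- The key inequality: `(tr √T)² ≤ tr √S · tr (T (√S)⁻¹)`. -/
lemma key_ineq {S T : Matrix n n ℝ} (hS : S.PosDef) (hT : T.PosDef) :
    (msqrt T).trace ^ 2 ≤ (msqrt S).trace * (T * (msqrt S)⁻¹).trace := by
  set s := msqrt S with hs
  set u := msqrt s with husq
  set t := msqrt T with ht
  have hspd : s.PosDef := msqrt_posDef hS
  have hupd : u.PosDef := msqrt_posDef hspd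
  have htpd : t.PosDef := msqrt_posDef hT
  have hud : IsUnit u.det := isUnit_iff_ne_zero.mpr hupd.det_pos.ne'
  have huu : u * u = s := msqrt_mul_self hspd.posSemidef
  have htt : t * t = T := msqrt_mul_self hT.posSemidef
  have hut : uᵀ = u := transpose_eq_of_hermitian hupd.1
  have htr : t = u * (u⁻¹ * t) := (mul_nonsing_inv_cancel_left _ _ hud).symm
  have hcs := trace_mul_sq_le u (u⁻¹ * t)
  rw [← htr, hut, huu] at hcs
  have hQ : ((u⁻¹ * t)ᵀ * (u⁻¹ * t)).trace = (T * s⁻¹).trace := by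
    have h1 : (u⁻¹ * t)ᵀ = t * u⁻¹ := by
      rw [transpose_mul, transpose_nonsing_inv, hut, transpose_eq_of_hermitian htpd.1]
    rw [h1]
    have h2 : t * u⁻¹ * (u⁻¹ * t) = (t * (u⁻¹ * u⁻¹)) * t := by
      simp only [mul_assoc]
    rw [h2, trace_mul_comm, ← mul_assoc, htt]
    congr 1
    rw [← Matrix.mul_inv_rev, huu]
  rw [hQ] at hcs
  exact hcs

lemma key_eq {S : Matrix n n ℝ} (hS : S.PosDef) :
    (S * (msqrt S)⁻¹).trace = (msqrt S).trace := by
  have hspd : (msqrt S).PosDef := msqrt_posDef hS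
  have hud : IsUnit (msqrt S).det := isUnit_iff_ne_zero.mpr hspd.det_pos.ne'
  nth_rewrite 1 [← msqrt_mul_self hS.posSemidef]
  rw [mul_assoc, mul_nonsing_inv _ hud, mul_one]

/-- Concavity of `(tr √·)²` (the fidelity) along segments of positive definite matrices. -/
lemma gsq_concave {P Q : Matrix n n ℝ} (hP : P.PosDef) (hQ : Q.PosDef) {a b : ℝ}
    (ha : 0 ≤ a) (hb : 0 ≤ b) (hab : a + b = 1) :
    a * (msqrt P).trace ^ 2 + b * (msqrt Q).trace ^ 2
      ≤ (msqrt (a • P + b • Q)).trace ^ 2 := by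
  set R := a • P + b • Q with hRdef
  have hR : R.PosDef := posDef_combo hP hQ ha hb hab
  have kP := key_ineq hR hP
  have kQ := key_ineq hR hQ
  have htr0 : 0 ≤ (msqrt R).trace := posSemidef_trace_nonneg (msqrt_posSemidef hR.posSemidef)
  have hsum : (R * (msqrt R)⁻¹).trace
      = a * (P * (msqrt R)⁻¹).trace + b * (Q * (msqrt R)⁻¹).trace := by
    rw [hRdef, add_mul, smul_mul_assoc, smul_mul_assoc, trace_add, trace_smul, trace_smul]
    simp [smul_eq_mul]
  calc a * (msqrt P).trace ^ 2 + b * (msqrt Q).trace ^ 2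
      ≤ a * ((msqrt R).trace * (P * (msqrt R)⁻¹).trace)
        + b * ((msqrt R).trace * (Q * (msqrt R)⁻¹).trace) :=
        add_le_add (mul_le_mul_of_nonneg_left kP ha) (mul_le_mul_of_nonneg_left kQ hb)
    _ = (msqrt R).trace * (a * (P * (msqrt R)⁻¹).trace + b * (Q * (msqrt R)⁻¹).trace) := by
        ring
    _ = (msqrt R).trace * (msqrt R).trace := by rw [← hsum, key_eq hR]
    _ = (msqrt R).trace ^ 2 := (sq _).symm

lemma term_eval {A X : Matrix n n ℝ} (hA : A.PosDef) (hX : X.PosDef) :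
    (msqrt (msqrt (A ⊗ₖ A) * (X ⊗ₖ X) * msqrt (A ⊗ₖ A))).trace
      = (msqrt (msqrt A * X * msqrt A)).trace ^ 2 := by
  have hconj : (msqrt A * X * msqrt A).PosSemidef :=
    (posDef_conj (msqrt_posDef hA) hX).posSemidef
  rw [msqrt_kron hA.posSemidef, ← mul_kronecker_mul, ← mul_kronecker_mul,
      msqrt_kron hconj, trace_kronecker, sq]

end Aux

/-- **Convexity of the matrix-variate Gaussian Wasserstein barycenter objective.**
Let `A 1, …, A n` be `d × d` real symmetric positive definite matrices.  The function
`F X = ∑ i, [tr(Aᵢ ⊗ Aᵢ) + tr(X ⊗ X) − 2 tr( ((Aᵢ ⊗ Aᵢ)^{1/2} (X ⊗ X) (Aᵢ ⊗ Aᵢ)^{1/2})^{1/2} )]`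
is convex on the convex set of `d × d` real symmetric positive definite matrices.
(For real matrices, positive definiteness `Matrix.PosDef` includes symmetry.) -/
theorem matrix_variate_barycenter_convex {d n : ℕ}
    (A : Fin n → Matrix (Fin d) (Fin d) ℝ) (hA : ∀ i, (A i).PosDef) :
    ConvexOn ℝ {X : Matrix (Fin d) (Fin d) ℝ | X.PosDef}
      (fun X => ∑ i, ((A i ⊗ₖ A i).trace + (X ⊗ₖ X).trace
        - 2 * (msqrt (msqrt (A i ⊗ₖ A i) * (X ⊗ₖ X) * msqrt (A i ⊗ₖ A i))).trace)) := by
  refine ⟨fun X hX Y hY a b ha hb hab => posDef_combo hX hY ha hb hab, ?_⟩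
  intro X hX Y hY a b ha hb hab
  simp only [Set.mem_setOf_eq] at hX hY
  have hZ : (a • X + b • Y).PosDef := posDef_combo hX hY ha hb hab
  simp only [smul_eq_mul]
  rw [Finset.mul_sum, Finset.mul_sum, ← Finset.sum_add_distrib]
  refine Finset.sum_le_sum fun i _ => ?_
  have hAi := hA i
  have hmA : (msqrt (A i)).PosDef := msqrt_posDef hAi
  have hdist : msqrt (A i) * (a • X + b • Y) * msqrt (A i)
      = a • (msqrt (A i) * X * msqrt (A i)) + b • (msqrt (A i) * Y * msqrt (A i)) := by
    rw [Matrix.mul_add, Matrix.add_mul]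
    rw [mul_smul_comm, mul_smul_comm, smul_mul_assoc, smul_mul_assoc]
  rw [term_eval hAi hX, term_eval hAi hY, term_eval hAi hZ, hdist]
  have hconc := gsq_concave (posDef_conj hmA hX) (posDef_conj hmA hY) ha hb hab
  have htz : (a • X + b • Y).trace = a * X.trace + b * Y.trace := by
    rw [trace_add, trace_smul, trace_smul]; simp [smul_eq_mul]
  rw [trace_kronecker, trace_kronecker, trace_kronecker, trace_kronecker, htz]
  have htr2 : (a * X.trace + b * Y.trace) * (a * X.trace + b * Y.trace)
      ≤ a * (X.trace * X.trace) + b * (Y.trace * Y.trace) := by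
    nlinarith [sq_nonneg (X.trace - Y.trace), mul_nonneg ha hb]
  nlinarith [hconc, htr2]
end

section
/- Fix γ ∈ (0,1). For all d×d Hermitian positive definite matrices A₁, A₂, B₁, B₂ and every λ ∈ [0,1], one has (λA₁ + (1−λ)A₂)^γ ⊗ (λB₁ + (1−λ)B₂)^{1−γ} ⪰ λ (A₁^γ ⊗ B₁^{1−γ}) + (1−λ) (A₂^γ ⊗ B₂^{1−γ}); that is, the map (A, B) ↦ A^γ ⊗ B^{1−γ} on pairs of Hermitian positive definite matrices is jointly concave with respect to the Löwner order. -/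
open Matrix
open scoped ComplexOrder Kronecker

noncomputable def mpow {d : ℕ} (M : Matrix (Fin d) (Fin d) ℂ) (γ : ℝ) :
    Matrix (Fin d) (Fin d) ℂ :=
  @dite _ (M.IsHermitian) (Classical.dec _)
    (fun h => (h.eigenvectorUnitary : Matrix (Fin d) (Fin d) ℂ) *
      Matrix.diagonal (fun i => ((h.eigenvalues i ^ γ : ℝ) : ℂ)) *
      star (h.eigenvectorUnitary : Matrix (Fin d) (Fin d) ℂ))
    (fun _ => 0)

namespace AndoLieb

variable {n : Type*} [Fintype n] [DecidableEq n]

/-- complex diagonal matrix with real entries -/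
def rdiag (d : n → ℝ) : Matrix n n ℂ := Matrix.diagonal fun i => (d i : ℂ)

noncomputable def hpow (M : Matrix n n ℂ) (γ : ℝ) : Matrix n n ℂ :=
  @dite _ (M.IsHermitian) (Classical.dec _)
    (fun h => (h.eigenvectorUnitary : Matrix n n ℂ) *
      Matrix.diagonal (fun i => ((h.eigenvalues i ^ γ : ℝ) : ℂ)) *
      star (h.eigenvectorUnitary : Matrix n n ℂ))
    (fun _ => 0)

lemma mpow_eq_hpow {d : ℕ} (M : Matrix (Fin d) (Fin d) ℂ) (γ : ℝ) : mpow M γ = hpow M γ := rfl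

/-- A "representation" of `M` as `U D U*` with `U` unitary and `D` a real diagonal. -/
structure IsRep (M U : Matrix n n ℂ) (d : n → ℝ) : Prop where
  unit : U * star U = 1
  unit' : star U * U = 1
  eq : M = U * rdiag d * star U

set_option linter.unusedSectionVars false

lemma rdiag_herm (d : n → ℝ) : (rdiag d).IsHermitian := by
  have hs : (star fun i => ((d i : ℝ) : ℂ)) = fun i => ((d i : ℝ) : ℂ) := by
    ext i
    simpa using Complex.conj_ofReal (d i)
  rw [Matrix.IsHermitian, rdiag, Matrix.diagonal_conjTranspose, hs]

lemma IsRep.herm {M U : Matrix n n ℂ} {d : n → ℝ} (h : IsRep M U d) : M.IsHermitian := by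
  rw [h.eq]
  unfold Matrix.IsHermitian
  simp only [conjTranspose_mul, conjTranspose_conjTranspose, star_eq_conjTranspose]
  rw [(rdiag_herm d).eq, Matrix.mul_assoc]

/-- Spectral theorem as an `IsRep`. -/
lemma isRep_spectral {M : Matrix n n ℂ} (hM : M.IsHermitian) :
    IsRep M hM.eigenvectorUnitary hM.eigenvalues := by
  refine ⟨?_, ?_, ?_⟩
  · exact Matrix.mem_unitaryGroup_iff.mp hM.eigenvectorUnitary.2
  · exact Matrix.mem_unitaryGroup_iff'.mp hM.eigenvectorUnitary.2
  · rw [rdiag]; exact hM.spectral_theorem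

/-- Uniqueness of the functional calculus: any two diagonalizations give the same
result when a function is applied to the diagonal. -/
lemma rep_funext {M U V : Matrix n n ℂ} {d e : n → ℝ}
    (h1 : IsRep M U d) (h2 : IsRep M V e) (f : ℝ → ℝ) :
    U * rdiag (fun i => f (d i)) * star U = V * rdiag (fun i => f (e i)) * star V := by
  have h3 : rdiag e * (star V * U) = (star V * U) * rdiag d := by
    have e1 : star V * M * U = rdiag e * (star V * U) := by
      rw [h2.eq]
      simp only [Matrix.mul_assoc]
      rw [← Matrix.mul_assoc (star V) V, h2.unit', Matrix.one_mul]
    have e2 : star V * M * U = (star V * U) * rdiag d := by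
      rw [h1.eq]
      simp only [Matrix.mul_assoc]
      rw [h1.unit', Matrix.mul_one]
    exact e1.symm.trans e2
  have key : ∀ i j, (e i : ℂ) * (star V * U) i j = (star V * U) i j * (d j : ℂ) := by
    intro i j
    have := congrFun (congrFun h3 i) j
    simpa [rdiag, Matrix.mul_diagonal, Matrix.diagonal_mul] using this
  have key2 : rdiag (fun i => f (e i)) * (star V * U)
      = (star V * U) * rdiag (fun i => f (d i)) := by
    ext i j
    simp only [rdiag, Matrix.mul_diagonal, Matrix.diagonal_mul]
    rcases eq_or_ne ((star V * U) i j) 0 with h0 | h0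
    · simp [h0]
    · have hde : (e i : ℂ) = (d j : ℂ) := by
        have hk := key i j
        rw [mul_comm ((star V * U) i j)] at hk
        exact mul_right_cancel₀ h0 hk
      have hde' : e i = d j := by exact_mod_cast hde
      rw [hde', mul_comm]
  have hfinal := congrArg (fun X : Matrix n n ℂ => V * X * star U) key2.symm
  simp only [← Matrix.mul_assoc] at hfinal
  rw [h2.unit, Matrix.one_mul] at hfinal
  rw [Matrix.mul_assoc (V * rdiag (fun i => f (e i)) * star V), h1.unit, Matrix.mul_one] at hfinal
  exact hfinal

/-- `hpow` computed on any representation. -/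
lemma IsRep.hpow {M U : Matrix n n ℂ} {d : n → ℝ} (h : IsRep M U d) (γ : ℝ) :
    IsRep (hpow M γ) U (fun i => d i ^ γ) := by
  have hM : M.IsHermitian := h.herm
  refine ⟨h.unit, h.unit', ?_⟩
  rw [AndoLieb.hpow, dif_pos hM]
  have := rep_funext (isRep_spectral hM) h (fun x => x ^ γ)
  simpa [rdiag] using this

lemma IsRep.mul {M N U : Matrix n n ℂ} {d e : n → ℝ}
    (h1 : IsRep M U d) (h2 : IsRep N U e) : IsRep (M * N) U (fun i => d i * e i) := by
  refine ⟨h1.unit, h1.unit', ?_⟩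
  rw [h1.eq, h2.eq]
  simp only [Matrix.mul_assoc]
  rw [← Matrix.mul_assoc (star U) U, h1.unit', Matrix.one_mul,
    ← Matrix.mul_assoc (rdiag d) (rdiag e)]
  congr 2
  rw [rdiag, rdiag, rdiag, Matrix.diagonal_mul_diagonal]
  congr 1
  ext i
  push_cast
  ring

lemma IsRep.one {U : Matrix n n ℂ} (hU : U * star U = 1) (hU' : star U * U = 1) :
    IsRep (1 : Matrix n n ℂ) U (fun _ => 1) := by
  refine ⟨hU, hU', ?_⟩
  have : rdiag (fun _ : n => (1 : ℝ)) = 1 := by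
    rw [rdiag]
    simp
  rw [this, Matrix.mul_one, hU]

/-- If two vectors agree, reps transfer. -/
lemma IsRep.congr {M U : Matrix n n ℂ} {d e : n → ℝ} (h : IsRep M U d) (hde : ∀ i, d i = e i) :
    IsRep M U e := by
  have : d = e := funext hde
  exact this ▸ h

lemma IsRep.posSemidef {M U : Matrix n n ℂ} {d : n → ℝ} (h : IsRep M U d)
    (hd : ∀ i, 0 ≤ d i) : M.PosSemidef := by
  rw [h.eq]
  have : (rdiag d).PosSemidef := by
    rw [rdiag]
    refine Matrix.PosSemidef.diagonal ?_
    intro i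
    simpa using Complex.zero_le_real.mpr (hd i)
  simpa [Matrix.star_eq_conjTranspose, Matrix.conjTranspose_conjTranspose] using
    this.mul_mul_conjTranspose_same U

lemma IsRep.posSemidef_iff {M U : Matrix n n ℂ} {d : n → ℝ} (h : IsRep M U d) :
    M.PosSemidef ↔ ∀ i, 0 ≤ d i := by
  have hu : U * Uᴴ = 1 := by simpa [Matrix.star_eq_conjTranspose] using h.unit
  have hu' : Uᴴ * U = 1 := by simpa [Matrix.star_eq_conjTranspose] using h.unit'
  constructor
  · intro hM
    have h2 : (star U * M * (star U)ᴴ).PosSemidef := hM.mul_mul_conjTranspose_same (star U)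
    have heq : star U * M * (star U)ᴴ = rdiag d := by
      rw [h.eq]
      simp only [Matrix.star_eq_conjTranspose, Matrix.conjTranspose_conjTranspose]
      simp only [← Matrix.mul_assoc]
      rw [hu', Matrix.one_mul, Matrix.mul_assoc, hu', Matrix.mul_one]
    rw [heq, rdiag] at h2
    intro i
    have := Matrix.posSemidef_diagonal_iff.mp h2 i
    exact_mod_cast this
  · exact h.posSemidef

lemma dot_conj (N M : Matrix n n ℂ) (x : n → ℂ) :
    star x ⬝ᵥ ((Nᴴ * M * N) *ᵥ x) = star (N *ᵥ x) ⬝ᵥ (M *ᵥ (N *ᵥ x)) := by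
  rw [← Matrix.mulVec_mulVec, ← Matrix.mulVec_mulVec, Matrix.dotProduct_mulVec,
    ← Matrix.star_mulVec]

lemma posDef_conj {M N K : Matrix n n ℂ} (hM : M.PosDef) (hKN : K * N = 1) :
    (Nᴴ * M * N).PosDef := by
  refine Matrix.PosDef.of_dotProduct_mulVec_pos ?_ ?_
  · have : (Nᴴ * M * N)ᴴ = Nᴴ * Mᴴ * N := by
      simp [Matrix.conjTranspose_mul, Matrix.mul_assoc]
    rw [Matrix.IsHermitian, this, hM.1.eq]
  · intro x hx
    rw [dot_conj]
    refine hM.dotProduct_mulVec_pos fun h0 => hx ?_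
    have : K *ᵥ (N *ᵥ x) = x := by rw [Matrix.mulVec_mulVec, hKN, Matrix.one_mulVec]
    rw [← this, h0, Matrix.mulVec_zero]

lemma rdiag_posDef {d : n → ℝ} (hd : ∀ i, 0 < d i) : (rdiag d).PosDef := by
  rw [rdiag]
  refine Matrix.PosDef.diagonal ?_
  intro i
  exact_mod_cast hd i

lemma IsRep.posDef {M U : Matrix n n ℂ} {d : n → ℝ} (h : IsRep M U d)
    (hd : ∀ i, 0 < d i) : M.PosDef := by
  have hN : ((star U)ᴴ * rdiag d * star U).PosDef :=
    posDef_conj (rdiag_posDef hd) h.unit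
  rw [h.eq]
  simpa [Matrix.star_eq_conjTranspose, Matrix.conjTranspose_conjTranspose] using hN

/-! ### Loewner order helpers -/

lemma psd_smul {A : Matrix n n ℂ} (hA : A.PosSemidef) {r : ℝ} (hr : 0 ≤ r) :
    (r • A).PosSemidef := by
  refine Matrix.PosSemidef.of_dotProduct_mulVec_nonneg ?_ ?_
  · rw [Matrix.IsHermitian, Matrix.conjTranspose_smul, hA.1.eq, star_trivial]
  · intro x
    have h0 : (0:ℂ) ≤ (r:ℂ) := Complex.zero_le_real.mpr hr
    have := hA.dotProduct_mulVec_nonneg x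
    calc (0:ℂ) = (r:ℂ) * 0 := by ring
    _ ≤ (r:ℂ) * (star x ⬝ᵥ A *ᵥ x) := by
        exact mul_le_mul_of_nonneg_left this h0
    _ = star x ⬝ᵥ (r • A) *ᵥ x := by
        rw [Matrix.smul_mulVec, dotProduct_smul]
        simp [Complex.real_smul]

lemma lle_trans {A B C : Matrix n n ℂ} (h1 : (B - A).PosSemidef) (h2 : (C - B).PosSemidef) :
    (C - A).PosSemidef := by
  have := h1.add h2
  simpa [sub_add_sub_cancel'] using this

lemma lle_add {A B C D : Matrix n n ℂ} (h1 : (B - A).PosSemidef) (h2 : (D - C).PosSemidef) :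
    ((B + D) - (A + C)).PosSemidef := by
  have := h1.add h2
  convert this using 1
  abel

lemma lle_smul {A B : Matrix n n ℂ} (h : (B - A).PosSemidef) {r : ℝ} (hr : 0 ≤ r) :
    (r • B - r • A).PosSemidef := by
  have := psd_smul h hr
  convert this using 1
  rw [smul_sub]

lemma lle_conj {A B : Matrix n n ℂ} (h : (B - A).PosSemidef) (M : Matrix n n ℂ) :
    (M * B * Mᴴ - M * A * Mᴴ).PosSemidef := by
  have := h.mul_mul_conjTranspose_same M
  convert this using 1
  rw [Matrix.mul_sub, Matrix.sub_mul]

/-! ### power laws -/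

lemma IsRep.matrix_eq {M N U : Matrix n n ℂ} {d e : n → ℝ}
    (h1 : IsRep M U d) (h2 : IsRep N U e) (hde : ∀ i, d i = e i) : M = N := by
  rw [h1.eq, h2.eq, show d = e from funext hde]

lemma hpow_add {M U : Matrix n n ℂ} {d : n → ℝ} (h : IsRep M U d) (hd : ∀ i, 0 < d i)
    (a b : ℝ) : hpow M a * hpow M b = hpow M (a + b) :=
  ((h.hpow a).mul (h.hpow b)).matrix_eq (h.hpow (a + b))
    fun i => (Real.rpow_add (hd i) a b).symm

lemma hpow_zero {M U : Matrix n n ℂ} {d : n → ℝ} (h : IsRep M U d) : hpow M 0 = 1 :=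
  (h.hpow 0).matrix_eq (IsRep.one h.unit h.unit') fun i => Real.rpow_zero (d i)

lemma hpow_one {M U : Matrix n n ℂ} {d : n → ℝ} (h : IsRep M U d) : hpow M 1 = M :=
  (h.hpow 1).matrix_eq h fun i => Real.rpow_one (d i)

/-! ### negative eigenvalue extraction -/

lemma exists_neg_eig {T : Matrix n n ℂ} (hT : T.IsHermitian) (h : ¬ T.PosSemidef) :
    ∃ (v : n → ℂ) (μ : ℝ), μ < 0 ∧ v ≠ 0 ∧ T *ᵥ v = (μ : ℂ) • v ∧ star v ⬝ᵥ v = 1 := by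
  set U : Matrix n n ℂ := (hT.eigenvectorUnitary : Matrix n n ℂ) with hU
  have hrep : IsRep T U hT.eigenvalues := isRep_spectral hT
  have hnot : ¬ ∀ i, 0 ≤ hT.eigenvalues i := fun hall => h (hrep.posSemidef hall)
  push_neg at hnot
  obtain ⟨i, hi⟩ := hnot
  set v : n → ℂ := fun k => U k i with hv
  have hn : star v ⬝ᵥ v = 1 := by
    have := congrFun (congrFun hrep.unit' i) i
    simpa [Matrix.mul_apply, Matrix.one_apply, dotProduct, hv] using this
  have hsingle : star U *ᵥ v = Pi.single i 1 := by
    ext j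
    have := congrFun (congrFun hrep.unit' j) i
    simp only [Matrix.mul_apply, Matrix.one_apply] at this
    simp only [Matrix.mulVec, dotProduct, hv, Pi.single_apply, this]
  have heig : T *ᵥ v = ((hT.eigenvalues i : ℝ) : ℂ) • v := by
    conv_lhs => rw [hrep.eq]
    rw [← Matrix.mulVec_mulVec, ← Matrix.mulVec_mulVec, hsingle, rdiag,
      Matrix.diagonal_mulVec_single]
    ext k
    simp only [Matrix.mulVec_single, Pi.smul_apply, hv, smul_eq_mul,
      MulOpposite.smul_eq_mul_unop, MulOpposite.unop_op]
    show U k i * (_ * 1) = _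
    ring
  refine ⟨v, hT.eigenvalues i, hi, ?_, heig, hn⟩
  intro h0
  rw [h0] at hn
  simp at hn

/-! ### square-root monotonicity core -/

lemma sub_posSemidef_of_sq {C S : Matrix n n ℂ} (hC : C.IsHermitian) (hS : S.PosDef)
    (h : (S * S - C * C).PosSemidef) : (S - C).PosSemidef := by
  by_contra hcon
  have hTh : (S - C).IsHermitian := hS.1.sub hC
  obtain ⟨v, μ, hμ, hv0, hvec, hnorm⟩ := exists_neg_eig hTh hcon
  set T := S - C with hT
  have hCeq : C = S - T := by rw [hT]; abel
  have hexp : S * S - C * C = S * T + T * S - T * T := by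
    rw [hCeq]
    noncomm_ring
  set σ : ℂ := star v ⬝ᵥ (S *ᵥ v) with hσ
  have hσpos : 0 < σ := hS.dotProduct_mulVec_pos hv0
  have hstarT : star v ᵥ* T = (μ : ℂ) • star v := by
    have h1 : star (T *ᵥ v) = star v ᵥ* Tᴴ := Matrix.star_mulVec T v
    rw [hTh.eq] at h1
    rw [← h1, hvec]
    ext k
    simp [Complex.conj_ofReal]
  have ht1 : star v ⬝ᵥ ((S * T) *ᵥ v) = (μ : ℂ) * σ := by
    rw [← Matrix.mulVec_mulVec, hvec, Matrix.mulVec_smul, dotProduct_smul, hσ]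
    simp
  have ht2 : star v ⬝ᵥ ((T * S) *ᵥ v) = (μ : ℂ) * σ := by
    rw [← Matrix.mulVec_mulVec, Matrix.dotProduct_mulVec, hstarT, smul_dotProduct, hσ,
      Matrix.dotProduct_mulVec]
    simp
  have ht3 : star v ⬝ᵥ ((T * T) *ᵥ v) = (μ : ℂ) * μ := by
    rw [← Matrix.mulVec_mulVec, hvec, Matrix.mulVec_smul, dotProduct_smul, hvec,
      dotProduct_smul, hnorm]
    simp
  have hq : (0 : ℂ) ≤ (μ : ℂ) * σ + (μ : ℂ) * σ - (μ : ℂ) * μ := by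
    have := h.dotProduct_mulVec_nonneg v
    rwa [hexp, Matrix.sub_mulVec, Matrix.add_mulVec, dotProduct_sub,
      dotProduct_add, ht1, ht2, ht3] at this
  rw [Complex.le_def] at hq
  rw [Complex.lt_def] at hσpos
  obtain ⟨hre, _⟩ := hq
  obtain ⟨hσre, hσim⟩ := hσpos
  simp only [Complex.zero_re, Complex.zero_im, Complex.add_re, Complex.sub_re, Complex.mul_re,
    Complex.ofReal_re, Complex.ofReal_im, Complex.mul_im] at hre hσre hσim
  rw [← hσim] at hre
  nlinarith

/-! ### more rep algebra -/

lemma IsRep.sub {M N U : Matrix n n ℂ} {d e : n → ℝ}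
    (h1 : IsRep M U d) (h2 : IsRep N U e) : IsRep (M - N) U (fun i => d i - e i) := by
  refine ⟨h1.unit, h1.unit', ?_⟩
  rw [h1.eq, h2.eq, ← Matrix.sub_mul, ← Matrix.mul_sub]
  congr 2
  rw [rdiag, rdiag, rdiag, Matrix.diagonal_sub]
  congr 1
  ext i
  push_cast
  ring

lemma posDef_rep {A : Matrix n n ℂ} (hA : A.PosDef) :
    ∃ (U : Matrix n n ℂ) (a : n → ℝ), IsRep A U a ∧ ∀ i, 0 < a i :=
  ⟨_, _, isRep_spectral hA.1, hA.eigenvalues_pos⟩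

lemma hpow_posDef {A : Matrix n n ℂ} (hA : A.PosDef) (γ : ℝ) : (hpow A γ).PosDef := by
  obtain ⟨U, a, hrep, ha⟩ := posDef_rep hA
  exact (hrep.hpow γ).posDef fun i => Real.rpow_pos_of_pos (ha i) γ

lemma hpow_herm {A : Matrix n n ℂ} (hA : A.IsHermitian) (γ : ℝ) : (hpow A γ).IsHermitian :=
  ((isRep_spectral hA).hpow γ).herm

lemma hpow_mul3 {A U : Matrix n n ℂ} {d : n → ℝ} (h : IsRep A U d) (hd : ∀ i, 0 < d i)
    (a b c : ℝ) (habc : a + b + c = 0) : hpow A a * hpow A b * hpow A c = 1 := by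
  rw [hpow_add h hd, hpow_add h hd, habc, hpow_zero h]

lemma hpow_half_mul_half {A : Matrix n n ℂ} (hA : A.PosDef) :
    hpow A (1/2) * hpow A (1/2) = A := by
  obtain ⟨U, a, hrep, ha⟩ := posDef_rep hA
  rw [hpow_add hrep ha, show (1/2 : ℝ) + 1/2 = 1 by norm_num, hpow_one hrep]

/-! ### geometric mean -/

noncomputable def gmean (A B : Matrix n n ℂ) : Matrix n n ℂ :=
  hpow A (1/2) * hpow (hpow A (-(1/2)) * B * hpow A (-(1/2))) (1/2) * hpow A (1/2)

lemma gmean_def (A B : Matrix n n ℂ) :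
    gmean A B = hpow A (1/2) * hpow (hpow A (-(1/2)) * B * hpow A (-(1/2))) (1/2)
      * hpow A (1/2) := rfl

section gmean

variable {A B : Matrix n n ℂ} (hA : A.PosDef) (hB : B.PosDef)

include hA hB in
lemma inner_posDef : (hpow A (-(1/2)) * B * hpow A (-(1/2))).PosDef := by
  obtain ⟨U, a, hrep, ha⟩ := posDef_rep hA
  have hRh : (hpow A (-(1/2))).IsHermitian := hpow_herm hA.1 _
  have hQR : hpow A (1/2) * hpow A (-(1/2)) = 1 := by
    rw [hpow_add hrep ha, show (1/2 : ℝ) + -(1/2) = 0 by norm_num, hpow_zero hrep]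
  have := posDef_conj (N := hpow A (-(1/2))) (K := hpow A (1/2)) hB hQR
  rwa [hRh.eq] at this

include hA hB in
lemma gmean_herm : (gmean A B).IsHermitian := by
  rw [gmean_def]
  set S := hpow (hpow A (-(1/2)) * B * hpow A (-(1/2))) (1/2) with hSdef
  have hPh : (hpow A (1/2)).IsHermitian := hpow_herm hA.1 _
  have hSh : S.IsHermitian := hpow_herm (inner_posDef hA hB).1 _
  rw [Matrix.IsHermitian]
  simp only [Matrix.conjTranspose_mul, hPh.eq, hSh.eq, Matrix.mul_assoc]

include hA hB in
lemma gmean_posSemidef : (gmean A B).PosSemidef := by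
  rw [gmean_def]
  set S := hpow (hpow A (-(1/2)) * B * hpow A (-(1/2))) (1/2) with hSdef
  have hPh : (hpow A (1/2)).IsHermitian := hpow_herm hA.1 _
  have hS : S.PosSemidef := (hpow_posDef (inner_posDef hA hB) _).posSemidef
  have := hS.mul_mul_conjTranspose_same (hpow A (1/2))
  rwa [hPh.eq] at this

include hA hB in
lemma gmean_identity : gmean A B * hpow A (-1) * gmean A B = B := by
  rw [gmean_def]
  obtain ⟨U, a, hrep, ha⟩ := posDef_rep hA
  set P := hpow A (1/2) with hPdef
  set R := hpow A (-(1/2)) with hRdef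
  set S := hpow (R * B * R) (1/2) with hSdef
  have hPR : P * R = 1 := by
    rw [hPdef, hRdef, hpow_add hrep ha, show (1/2 : ℝ) + -(1/2) = 0 by norm_num, hpow_zero hrep]
  have hRP : R * P = 1 := by
    rw [hPdef, hRdef, hpow_add hrep ha, show (-(1/2) : ℝ) + 1/2 = 0 by norm_num, hpow_zero hrep]
  have key : P * hpow A (-1) * P = 1 := hpow_mul3 hrep ha _ _ _ (by norm_num)
  have hSS : S * S = R * B * R := hpow_half_mul_half (inner_posDef hA hB)
  have hRBR : P * (R * B * R) * P = B := by
    calc P * (R * B * R) * P = P * R * B * (R * P) := by simp only [Matrix.mul_assoc]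
    _ = B := by rw [hPR, hRP, Matrix.one_mul, Matrix.mul_one]
  calc P * S * P * hpow A (-1) * (P * S * P)
      = P * S * (P * hpow A (-1) * P) * (S * P) := by simp only [Matrix.mul_assoc]
    _ = P * S * S * P := by rw [key, Matrix.mul_one, ← Matrix.mul_assoc]
    _ = P * (R * B * R) * P := by rw [Matrix.mul_assoc P S S, hSS]
    _ = B := hRBR

lemma gmean_max_aux {P R S C X B Ainv : Matrix n n ℂ}
    (hPh : P.IsHermitian) (hRh : R.IsHermitian) (hX : X.IsHermitian)
    (hPR : P * R = 1) (hRP : R * P = 1) (hRR : R * R = Ainv)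
    (hCdef : C = R * X * R) (hSpd : S.PosDef) (hSS : S * S = R * B * R)
    (h : (B - X * Ainv * X).PosSemidef) : (P * S * P - X).PosSemidef := by
  have hCh : C.IsHermitian := by
    rw [hCdef, Matrix.IsHermitian]
    simp only [Matrix.conjTranspose_mul, hRh.eq, hX.eq, Matrix.mul_assoc]
  have h1 := h.mul_mul_conjTranspose_same R
  rw [hRh.eq] at h1
  have h2 : R * (B - X * Ainv * X) * R = S * S - C * C := by
    rw [Matrix.mul_sub, Matrix.sub_mul, hSS]
    congr 1
    rw [← hRR, hCdef]
    simp only [Matrix.mul_assoc]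
  rw [h2] at h1
  have h3 : (S - C).PosSemidef := sub_posSemidef_of_sq hCh hSpd h1
  have h4 := h3.mul_mul_conjTranspose_same P
  rw [hPh.eq] at h4
  have hPCP : P * C * P = X := by
    rw [hCdef]
    calc P * (R * X * R) * P = P * R * X * (R * P) := by simp only [Matrix.mul_assoc]
    _ = X := by rw [hPR, hRP, Matrix.one_mul, Matrix.mul_one]
  have h5 : P * (S - C) * P = P * S * P - X := by
    rw [Matrix.mul_sub, Matrix.sub_mul, hPCP]
  rwa [h5] at h4

include hA hB in
lemma gmean_max {X : Matrix n n ℂ} (hX : X.IsHermitian)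
    (h : (B - X * hpow A (-1) * X).PosSemidef) : (gmean A B - X).PosSemidef := by
  rw [gmean_def]
  obtain ⟨U, a, hrep, ha⟩ := posDef_rep hA
  refine gmean_max_aux (hpow_herm hA.1 _) (hpow_herm hA.1 _) hX ?_ ?_ ?_ rfl
    (hpow_posDef (inner_posDef hA hB) _) (hpow_half_mul_half (inner_posDef hA hB)) h
  · rw [hpow_add hrep ha, show (1/2 : ℝ) + -(1/2) = 0 by norm_num, hpow_zero hrep]
  · rw [hpow_add hrep ha, show (-(1/2) : ℝ) + 1/2 = 0 by norm_num, hpow_zero hrep]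
  · rw [hpow_add hrep ha, show (-(1/2) : ℝ) + -(1/2) = -1 by norm_num]

end gmean

lemma hpow_mul_self_mul {A U : Matrix n n ℂ} {d : n → ℝ} (h : IsRep A U d)
    (hd : ∀ i, 0 < d i) (a b : ℝ) (hab : a + 1 + b = 0) :
    hpow A a * A * hpow A b = 1 := by
  calc hpow A a * A * hpow A b = hpow A a * hpow A 1 * hpow A b := by rw [hpow_one h]
  _ = 1 := hpow_mul3 h hd a 1 b hab

lemma hpow_neg_one_mul {A U : Matrix n n ℂ} {d : n → ℝ} (h : IsRep A U d)
    (hd : ∀ i, 0 < d i) : hpow A (-1) * A = 1 := by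
  calc hpow A (-1) * A = hpow A (-1) * hpow A 1 := by rw [hpow_one h]
  _ = 1 := by rw [hpow_add h hd]; norm_num; exact hpow_zero h

lemma mul_hpow_neg_one {A U : Matrix n n ℂ} {d : n → ℝ} (h : IsRep A U d)
    (hd : ∀ i, 0 < d i) : A * hpow A (-1) = 1 := by
  calc A * hpow A (-1) = hpow A 1 * hpow A (-1) := by rw [hpow_one h]
  _ = 1 := by rw [hpow_add h hd]; norm_num; exact hpow_zero h

lemma inv_eq_aux {R Q Zi X Xi : Matrix n n ℂ}
    (hRQ : R * Q = 1) (hQR : Q * R = 1)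
    (hZiZ : Zi * (R * X * R) = 1) (hXXi : X * Xi = 1) :
    R * Zi * R = Xi := by
  have hX : X = Q * (R * X * R) * Q := by
    have : Q * (R * X * R) * Q = Q * R * X * (R * Q) := by simp only [Matrix.mul_assoc]
    rw [this, hQR, hRQ, Matrix.one_mul, Matrix.mul_one]
  have haX : R * Zi * R * X = 1 := by
    conv_lhs => rw [hX]
    calc R * Zi * R * (Q * (R * X * R) * Q)
        = R * (Zi * ((R * Q) * ((R * X * R) * Q))) := by simp only [Matrix.mul_assoc]
      _ = R * (Zi * ((R * X * R) * Q)) := by rw [hRQ, Matrix.one_mul]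
      _ = R * ((Zi * (R * X * R)) * Q) := by simp only [Matrix.mul_assoc]
      _ = 1 := by rw [hZiZ, Matrix.one_mul, hRQ]
  calc R * Zi * R = R * Zi * R * (X * Xi) := by rw [hXXi, Matrix.mul_one]
    _ = (R * Zi * R * X) * Xi := by simp only [Matrix.mul_assoc]
    _ = Xi := by rw [haX, Matrix.one_mul]

lemma inv_antitone {X Y : Matrix n n ℂ} (hX : X.PosDef) (hY : Y.PosDef)
    (h : (Y - X).PosSemidef) : (hpow X (-1) - hpow Y (-1)).PosSemidef := by
  obtain ⟨U, y, hrepY, hy⟩ := posDef_rep hY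
  obtain ⟨Ux, xv, hrepX, hx⟩ := posDef_rep hX
  have hRh : (hpow Y (-(1/2))).IsHermitian := hpow_herm hY.1 _
  have hQR : hpow Y (1/2) * hpow Y (-(1/2)) = 1 := by
    rw [hpow_add hrepY hy, show (1/2 : ℝ) + -(1/2) = 0 by norm_num, hpow_zero hrepY]
  have hRQ : hpow Y (-(1/2)) * hpow Y (1/2) = 1 := by
    rw [hpow_add hrepY hy, show (-(1/2) : ℝ) + 1/2 = 0 by norm_num, hpow_zero hrepY]
  have hRR : hpow Y (-(1/2)) * hpow Y (-(1/2)) = hpow Y (-1) := by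
    rw [hpow_add hrepY hy, show (-(1/2) : ℝ) + -(1/2) = -1 by norm_num]
  have hZpd : (hpow Y (-(1/2)) * X * hpow Y (-(1/2))).PosDef := by
    have := posDef_conj (N := hpow Y (-(1/2))) (K := hpow Y (1/2)) hX hQR
    rwa [hRh.eq] at this
  obtain ⟨V, z, hrepZ, hz⟩ := posDef_rep hZpd
  have hRYR : hpow Y (-(1/2)) * Y * hpow Y (-(1/2)) = 1 :=
    hpow_mul_self_mul hrepY hy _ _ (by norm_num)
  have h1 : ((1 : Matrix n n ℂ) - hpow Y (-(1/2)) * X * hpow Y (-(1/2))).PosSemidef := by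
    have := h.mul_mul_conjTranspose_same (hpow Y (-(1/2)))
    rw [hRh.eq] at this
    have e1 : hpow Y (-(1/2)) * (Y - X) * hpow Y (-(1/2))
        = 1 - hpow Y (-(1/2)) * X * hpow Y (-(1/2)) := by
      rw [Matrix.mul_sub, Matrix.sub_mul, hRYR]
    rwa [e1] at this
  have hztop : ∀ i, z i ≤ 1 := by
    intro i
    have hiff := ((IsRep.one hrepZ.unit hrepZ.unit').sub hrepZ).posSemidef_iff
    have := hiff.mp h1 i
    linarith
  have h2 : (hpow (hpow Y (-(1/2)) * X * hpow Y (-(1/2))) (-1) - 1).PosSemidef := by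
    refine ((hrepZ.hpow (-1)).sub (IsRep.one hrepZ.unit hrepZ.unit')).posSemidef ?_
    intro i
    have h3 : 0 < z i := hz i
    have h4 : z i ≤ 1 := hztop i
    rw [Real.rpow_neg_one]
    have h5 : z i * (z i)⁻¹ = 1 := mul_inv_cancel₀ (ne_of_gt h3)
    have h6 : 0 ≤ (1 - z i) * (z i)⁻¹ :=
      mul_nonneg (by linarith) (le_of_lt (inv_pos.mpr h3))
    nlinarith
  -- conjugate h2 by R := hpow Y (-(1/2))
  have h3 := lle_conj h2 (hpow Y (-(1/2)))
  rw [hRh.eq] at h3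
  have hone : hpow Y (-(1/2)) * 1 * hpow Y (-(1/2)) = hpow Y (-1) := by
    rw [Matrix.mul_one, hRR]
  -- identify R * Z⁻¹ * R with X⁻¹
  have hZinvZ : hpow (hpow Y (-(1/2)) * X * hpow Y (-(1/2))) (-1)
      * (hpow Y (-(1/2)) * X * hpow Y (-(1/2))) = 1 := hpow_neg_one_mul hrepZ hz
  have hRZR : hpow Y (-(1/2)) * hpow (hpow Y (-(1/2)) * X * hpow Y (-(1/2))) (-1)
      * hpow Y (-(1/2)) = hpow X (-1) :=
    inv_eq_aux hRQ hQR (hpow_neg_one_mul hrepZ hz) (mul_hpow_neg_one hrepX hx)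
  rwa [hone, hRZR] at h3

section gmean2

variable {A A' B B' : Matrix n n ℂ}
  (hA : A.PosDef) (hA' : A'.PosDef) (hB : B.PosDef) (hB' : B'.PosDef)

include hA hA' hB hB' in
lemma gmean_mono (h1 : (A' - A).PosSemidef) (h2 : (B' - B).PosSemidef) :
    (gmean A' B' - gmean A B).PosSemidef := by
  have hG : (gmean A B).IsHermitian := gmean_herm hA hB
  have hident : gmean A B * hpow A (-1) * gmean A B = B := gmean_identity hA hB
  have hinv : (hpow A (-1) - hpow A' (-1)).PosSemidef := inv_antitone hA hA' h1
  have hconj := lle_conj hinv (gmean A B)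
  rw [hG.eq] at hconj
  rw [hident] at hconj
  -- hconj : (B - gmean A B * hpow A' (-1) * gmean A B).PosSemidef
  have hchain : (B' - gmean A B * hpow A' (-1) * gmean A B).PosSemidef := lle_trans hconj h2
  exact gmean_max hA' hB' hG hchain

end gmean2

lemma posDef_smul {A : Matrix n n ℂ} (hA : A.PosDef) {r : ℝ} (hr : 0 < r) :
    (r • A).PosDef := by
  refine Matrix.PosDef.of_dotProduct_mulVec_pos ?_ ?_
  · rw [Matrix.IsHermitian, Matrix.conjTranspose_smul, hA.1.eq, star_trivial]
  · intro x hx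
    have h0 : (0:ℂ) < (r:ℂ) := by exact_mod_cast hr
    have := hA.dotProduct_mulVec_pos hx
    have hmul : (0:ℂ) < (r:ℂ) * (star x ⬝ᵥ A *ᵥ x) := mul_pos h0 this
    calc (0:ℂ) < (r:ℂ) * (star x ⬝ᵥ A *ᵥ x) := hmul
    _ = star x ⬝ᵥ (r • A) *ᵥ x := by
        rw [Matrix.smul_mulVec, dotProduct_smul]
        simp [Complex.real_smul]

lemma convex_posDef {A₁ A₂ : Matrix n n ℂ} (h1 : A₁.PosDef) (h2 : A₂.PosDef) {t : ℝ}
    (ht0 : 0 ≤ t) (ht1 : t ≤ 1) : (t • A₁ + (1 - t) • A₂).PosDef := by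
  rcases eq_or_lt_of_le ht0 with h | h
  · rw [← h]
    simp only [zero_smul, sub_zero, one_smul, zero_add]
    exact h2
  · exact (posDef_smul h1 h).add_posSemidef (psd_smul h2.posSemidef (by linarith))

lemma convex_herm {A₁ A₂ : Matrix n n ℂ} (h1 : A₁.IsHermitian) (h2 : A₂.IsHermitian) (t : ℝ) :
    (t • A₁ + (1 - t) • A₂).IsHermitian := by
  rw [Matrix.IsHermitian, Matrix.conjTranspose_add, Matrix.conjTranspose_smul,
    Matrix.conjTranspose_smul, h1.eq, h2.eq, star_trivial, star_trivial]

section concave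

variable {A₁ A₂ B₁ B₂ : Matrix n n ℂ}
  (hA₁ : A₁.PosDef) (hA₂ : A₂.PosDef) (hB₁ : B₁.PosDef) (hB₂ : B₂.PosDef)

include hA₁ hA₂ hB₁ hB₂ in
lemma gmean_concave {t : ℝ} (ht0 : 0 ≤ t) (ht1 : t ≤ 1) :
    (gmean (t • A₁ + (1 - t) • A₂) (t • B₁ + (1 - t) • B₂)
      - (t • gmean A₁ B₁ + (1 - t) • gmean A₂ B₂)).PosSemidef := by
  obtain ⟨U₁, a₁, hrep₁, ha₁⟩ := posDef_rep hA₁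
  obtain ⟨U₂, a₂, hrep₂, ha₂⟩ := posDef_rep hA₂
  have hAc : (t • A₁ + (1 - t) • A₂).PosDef := convex_posDef hA₁ hA₂ ht0 ht1
  have hBc : (t • B₁ + (1 - t) • B₂).PosDef := convex_posDef hB₁ hB₂ ht0 ht1
  obtain ⟨Uc, ac, hrepc, hac⟩ := posDef_rep hAc
  haveI hI₁ : Invertible A₁ := ⟨hpow A₁ (-1), hpow_neg_one_mul hrep₁ ha₁,
    mul_hpow_neg_one hrep₁ ha₁⟩
  haveI hI₂ : Invertible A₂ := ⟨hpow A₂ (-1), hpow_neg_one_mul hrep₂ ha₂,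
    mul_hpow_neg_one hrep₂ ha₂⟩
  haveI hIc : Invertible (t • A₁ + (1 - t) • A₂) := ⟨hpow (t • A₁ + (1 - t) • A₂) (-1),
    hpow_neg_one_mul hrepc hac, mul_hpow_neg_one hrepc hac⟩
  have hinv₁ : A₁⁻¹ = hpow A₁ (-1) := Matrix.inv_eq_right_inv (mul_hpow_neg_one hrep₁ ha₁)
  have hinv₂ : A₂⁻¹ = hpow A₂ (-1) := Matrix.inv_eq_right_inv (mul_hpow_neg_one hrep₂ ha₂)
  have hinvc : (t • A₁ + (1 - t) • A₂)⁻¹ = hpow (t • A₁ + (1 - t) • A₂) (-1) :=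
    Matrix.inv_eq_right_inv (mul_hpow_neg_one hrepc hac)
  have hG₁ : (gmean A₁ B₁).IsHermitian := gmean_herm hA₁ hB₁
  have hG₂ : (gmean A₂ B₂).IsHermitian := gmean_herm hA₂ hB₂
  have hblock₁ : (Matrix.fromBlocks A₁ (gmean A₁ B₁) (gmean A₁ B₁)ᴴ B₁).PosSemidef := by
    rw [Matrix.PosDef.fromBlocks₁₁ _ _ hA₁]
    rw [hG₁.eq, hinv₁, gmean_identity hA₁ hB₁, sub_self]
    exact Matrix.PosSemidef.zero
  have hblock₂ : (Matrix.fromBlocks A₂ (gmean A₂ B₂) (gmean A₂ B₂)ᴴ B₂).PosSemidef := by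
    rw [Matrix.PosDef.fromBlocks₁₁ _ _ hA₂]
    rw [hG₂.eq, hinv₂, gmean_identity hA₂ hB₂, sub_self]
    exact Matrix.PosSemidef.zero
  have hsum := (psd_smul hblock₁ ht0).add (psd_smul hblock₂ (by linarith : (0:ℝ) ≤ 1 - t))
  have hcomb : t • Matrix.fromBlocks A₁ (gmean A₁ B₁) (gmean A₁ B₁)ᴴ B₁
      + (1 - t) • Matrix.fromBlocks A₂ (gmean A₂ B₂) (gmean A₂ B₂)ᴴ B₂
      = Matrix.fromBlocks (t • A₁ + (1 - t) • A₂)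
          (t • gmean A₁ B₁ + (1 - t) • gmean A₂ B₂)
          (t • gmean A₁ B₁ + (1 - t) • gmean A₂ B₂)ᴴ
          (t • B₁ + (1 - t) • B₂) := by
    rw [Matrix.fromBlocks_smul, Matrix.fromBlocks_smul, Matrix.fromBlocks_add]
    congr 1
    rw [Matrix.conjTranspose_add, Matrix.conjTranspose_smul, Matrix.conjTranspose_smul,
      star_trivial, star_trivial]
  rw [hcomb] at hsum
  have hmain := (Matrix.PosDef.fromBlocks₁₁ _ _ hAc).mp hsum
  have hXc : (t • gmean A₁ B₁ + (1 - t) • gmean A₂ B₂).IsHermitian := convex_herm hG₁ hG₂ t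
  rw [hXc.eq, hinvc] at hmain
  exact gmean_max hAc hBc hXc hmain

end concave

/-! ### Kronecker products -/

section kron

variable {m : Type*} [Fintype m] [DecidableEq m]

lemma star_kron (X : Matrix n n ℂ) (Y : Matrix m m ℂ) :
    star (X ⊗ₖ Y) = star X ⊗ₖ star Y := by
  ext ⟨i, j⟩ ⟨k, l⟩
  simp only [Matrix.star_eq_conjTranspose, Matrix.conjTranspose_apply,
    Matrix.kroneckerMap_apply, star_mul']

lemma rdiag_kron (a : n → ℝ) (b : m → ℝ) :
    rdiag a ⊗ₖ rdiag b = rdiag (fun p : n × m => a p.1 * b p.2) := by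
  rw [rdiag, rdiag, rdiag, Matrix.diagonal_kronecker_diagonal]
  congr 1
  ext p
  push_cast
  ring

lemma IsRep.kron {A U : Matrix n n ℂ} {a : n → ℝ} {B V : Matrix m m ℂ} {b : m → ℝ}
    (h1 : IsRep A U a) (h2 : IsRep B V b) :
    IsRep (A ⊗ₖ B) (U ⊗ₖ V) (fun p => a p.1 * b p.2) := by
  refine ⟨?_, ?_, ?_⟩
  · rw [star_kron, ← Matrix.mul_kronecker_mul, h1.unit, h2.unit, Matrix.one_kronecker_one]
  · rw [star_kron, ← Matrix.mul_kronecker_mul, h1.unit', h2.unit', Matrix.one_kronecker_one]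
  · calc A ⊗ₖ B = (U * rdiag a * star U) ⊗ₖ (V * rdiag b * star V) := by rw [← h1.eq, ← h2.eq]
    _ = ((U * rdiag a) ⊗ₖ (V * rdiag b)) * (star U ⊗ₖ star V) := by
        rw [Matrix.mul_kronecker_mul]
    _ = (U ⊗ₖ V) * (rdiag a ⊗ₖ rdiag b) * (star U ⊗ₖ star V) := by
        rw [Matrix.mul_kronecker_mul]
    _ = (U ⊗ₖ V) * rdiag (fun p : n × m => a p.1 * b p.2) * star (U ⊗ₖ V) := by
        rw [rdiag_kron, star_kron]

lemma kron_smul_right (A : Matrix n n ℂ) (B : Matrix m m ℂ) (r : ℝ) :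
    A ⊗ₖ (r • B) = r • (A ⊗ₖ B) := by
  ext ⟨i, j⟩ ⟨k, l⟩
  simp only [Matrix.kroneckerMap_apply, Matrix.smul_apply, Complex.real_smul]
  ring

lemma kron_smul_left (A : Matrix n n ℂ) (B : Matrix m m ℂ) (r : ℝ) :
    (r • A) ⊗ₖ B = r • (A ⊗ₖ B) := by
  ext ⟨i, j⟩ ⟨k, l⟩
  simp only [Matrix.kroneckerMap_apply, Matrix.smul_apply, Complex.real_smul]
  ring

lemma phi_posDef {A : Matrix n n ℂ} {B : Matrix m m ℂ} (hA : A.PosDef) (hB : B.PosDef)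
    (s : ℝ) : (hpow A s ⊗ₖ hpow B (1 - s)).PosDef := by
  obtain ⟨U, a, hrA, ha⟩ := posDef_rep hA
  obtain ⟨V, b, hrB, hb⟩ := posDef_rep hB
  exact ((hrA.hpow s).kron (hrB.hpow (1 - s))).posDef
    fun p => mul_pos (Real.rpow_pos_of_pos (ha p.1) _) (Real.rpow_pos_of_pos (hb p.2) _)

end kron

/-! ### gmean on a common representation -/

lemma scalar_gmean {x y : ℝ} (hx : 0 < x) (hy : 0 < y) :
    x ^ (1/2 : ℝ) * (x ^ (-(1/2) : ℝ) * y * x ^ (-(1/2) : ℝ)) ^ (1/2 : ℝ) * x ^ (1/2 : ℝ)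
      = (x * y) ^ (1/2 : ℝ) := by
  have hxr : (0:ℝ) < x ^ (-(1/2) : ℝ) := Real.rpow_pos_of_pos hx _
  have key : ∀ a b : ℝ, x ^ a * x ^ b = x ^ (a + b) := fun a b => (Real.rpow_add hx a b).symm
  rw [Real.mul_rpow (mul_nonneg hxr.le hy.le) hxr.le, Real.mul_rpow hxr.le hy.le,
    ← Real.rpow_mul hx.le, Real.mul_rpow hx.le hy.le]
  calc x ^ (1/2:ℝ) * (x ^ (-(1/2) * (1/2) : ℝ) * y ^ (1/2:ℝ) * x ^ (-(1/2) * (1/2) : ℝ))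
        * x ^ (1/2:ℝ)
      = x ^ (1/2:ℝ) * x ^ (-(1/2) * (1/2) : ℝ) * x ^ (-(1/2) * (1/2) : ℝ) * x ^ (1/2:ℝ)
        * y ^ (1/2:ℝ) := by ring
    _ = x ^ (1/2 + -(1/2) * (1/2) + -(1/2) * (1/2) + 1/2 : ℝ) * y ^ (1/2:ℝ) := by
        rw [key, key, key]
    _ = x ^ (1/2:ℝ) * y ^ (1/2:ℝ) := by norm_num

lemma isRep_gmean {M N U : Matrix n n ℂ} {c e : n → ℝ} (hM : IsRep M U c) (hN : IsRep N U e)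
    (hc : ∀ i, 0 < c i) (he : ∀ i, 0 < e i) :
    IsRep (gmean M N) U (fun i => (c i * e i) ^ (1/2 : ℝ)) := by
  rw [gmean_def]
  have rinner : IsRep (hpow M (-(1/2)) * N * hpow M (-(1/2))) U
      (fun i => c i ^ (-(1/2) : ℝ) * e i * c i ^ (-(1/2) : ℝ)) :=
    ((hM.hpow _).mul hN).mul (hM.hpow _)
  have r2 := ((hM.hpow (1/2)).mul (rinner.hpow (1/2))).mul (hM.hpow (1/2))
  exact r2.congr fun i => scalar_gmean (hc i) (he i)

lemma phi_gmean {m : Type*} [Fintype m] [DecidableEq m]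
    {A : Matrix n n ℂ} {B : Matrix m m ℂ} (hA : A.PosDef) (hB : B.PosDef) (γ δ : ℝ) :
    gmean (hpow A γ ⊗ₖ hpow B (1 - γ)) (hpow A δ ⊗ₖ hpow B (1 - δ))
      = hpow A ((γ + δ)/2) ⊗ₖ hpow B (1 - (γ + δ)/2) := by
  obtain ⟨U, a, hrA, ha⟩ := posDef_rep hA
  obtain ⟨V, b, hrB, hb⟩ := posDef_rep hB
  have r1 := (hrA.hpow γ).kron (hrB.hpow (1 - γ))
  have r2 := (hrA.hpow δ).kron (hrB.hpow (1 - δ))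
  have hc : ∀ p : n × m, 0 < a p.1 ^ γ * b p.2 ^ (1 - γ) :=
    fun p => mul_pos (Real.rpow_pos_of_pos (ha p.1) _) (Real.rpow_pos_of_pos (hb p.2) _)
  have hd : ∀ p : n × m, 0 < a p.1 ^ δ * b p.2 ^ (1 - δ) :=
    fun p => mul_pos (Real.rpow_pos_of_pos (ha p.1) _) (Real.rpow_pos_of_pos (hb p.2) _)
  have rg := isRep_gmean r1 r2 hc hd
  have rm := (hrA.hpow ((γ + δ)/2)).kron (hrB.hpow (1 - (γ + δ)/2))
  refine rg.matrix_eq rm fun p => ?_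
  have hap := ha p.1
  have hbp := hb p.2
  have e1 : a p.1 ^ γ * b p.2 ^ (1 - γ) * (a p.1 ^ δ * b p.2 ^ (1 - δ))
      = a p.1 ^ (γ + δ) * b p.2 ^ ((1 - γ) + (1 - δ)) := by
    rw [Real.rpow_add hap, Real.rpow_add hbp]
    ring
  rw [e1, Real.mul_rpow (Real.rpow_pos_of_pos hap _).le (Real.rpow_pos_of_pos hbp _).le,
    ← Real.rpow_mul hap.le, ← Real.rpow_mul hbp.le]
  congr 1
  · congr 1
    ring
  · congr 1
    ring

/-! ### the inductive predicate -/

def Good (s : ℝ) : Prop :=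
  ∀ (d : ℕ) (A₁ A₂ B₁ B₂ : Matrix (Fin d) (Fin d) ℂ),
    A₁.PosDef → A₂.PosDef → B₁.PosDef → B₂.PosDef → ∀ t : ℝ, 0 ≤ t → t ≤ 1 →
    ((hpow (t • A₁ + (1 - t) • A₂) s ⊗ₖ hpow (t • B₁ + (1 - t) • B₂) (1 - s))
      - (t • (hpow A₁ s ⊗ₖ hpow B₁ (1 - s))
        + (1 - t) • (hpow A₂ s ⊗ₖ hpow B₂ (1 - s)))).PosSemidef

lemma good_zero : Good 0 := by
  intro d A₁ A₂ B₁ B₂ hA₁ hA₂ hB₁ hB₂ t ht0 ht1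
  obtain ⟨U₁, b₁, hrB₁, hb₁⟩ := posDef_rep hB₁
  obtain ⟨U₂, b₂, hrB₂, hb₂⟩ := posDef_rep hB₂
  obtain ⟨Uc, bc, hrBc, hbc⟩ := posDef_rep (convex_posDef hB₁ hB₂ ht0 ht1)
  obtain ⟨V₁, a₁, hrA₁, ha₁⟩ := posDef_rep hA₁
  obtain ⟨V₂, a₂, hrA₂, ha₂⟩ := posDef_rep hA₂
  obtain ⟨Vc, ac, hrAc, hac⟩ := posDef_rep (convex_posDef hA₁ hA₂ ht0 ht1)
  rw [hpow_zero hrA₁, hpow_zero hrA₂, hpow_zero hrAc, show (1:ℝ) - 0 = 1 by norm_num,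
    hpow_one hrB₁, hpow_one hrB₂, hpow_one hrBc, Matrix.kronecker_add, kron_smul_right,
    kron_smul_right, sub_self]
  exact Matrix.PosSemidef.zero

lemma good_one : Good 1 := by
  intro d A₁ A₂ B₁ B₂ hA₁ hA₂ hB₁ hB₂ t ht0 ht1
  obtain ⟨U₁, b₁, hrB₁, hb₁⟩ := posDef_rep hB₁
  obtain ⟨U₂, b₂, hrB₂, hb₂⟩ := posDef_rep hB₂
  obtain ⟨Uc, bc, hrBc, hbc⟩ := posDef_rep (convex_posDef hB₁ hB₂ ht0 ht1)
  obtain ⟨V₁, a₁, hrA₁, ha₁⟩ := posDef_rep hA₁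
  obtain ⟨V₂, a₂, hrA₂, ha₂⟩ := posDef_rep hA₂
  obtain ⟨Vc, ac, hrAc, hac⟩ := posDef_rep (convex_posDef hA₁ hA₂ ht0 ht1)
  rw [show (1:ℝ) - 1 = 0 by norm_num, hpow_zero hrB₁, hpow_zero hrB₂, hpow_zero hrBc,
    hpow_one hrA₁, hpow_one hrA₂, hpow_one hrAc, Matrix.add_kronecker, kron_smul_left,
    kron_smul_left, sub_self]
  exact Matrix.PosSemidef.zero

lemma good_mid {γ δ : ℝ} (hγ : Good γ) (hδ : Good δ) : Good ((γ + δ)/2) := by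
  intro d A₁ A₂ B₁ B₂ hA₁ hA₂ hB₁ hB₂ t ht0 ht1
  have hAc : (t • A₁ + (1 - t) • A₂).PosDef := convex_posDef hA₁ hA₂ ht0 ht1
  have hBc : (t • B₁ + (1 - t) • B₂).PosDef := convex_posDef hB₁ hB₂ ht0 ht1
  -- positive definiteness of all Φ terms
  have hPg1 : (hpow A₁ γ ⊗ₖ hpow B₁ (1 - γ)).PosDef := phi_posDef hA₁ hB₁ γ
  have hPg2 : (hpow A₂ γ ⊗ₖ hpow B₂ (1 - γ)).PosDef := phi_posDef hA₂ hB₂ γ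
  have hPd1 : (hpow A₁ δ ⊗ₖ hpow B₁ (1 - δ)).PosDef := phi_posDef hA₁ hB₁ δ
  have hPd2 : (hpow A₂ δ ⊗ₖ hpow B₂ (1 - δ)).PosDef := phi_posDef hA₂ hB₂ δ
  have hQg : (hpow (t • A₁ + (1 - t) • A₂) γ
      ⊗ₖ hpow (t • B₁ + (1 - t) • B₂) (1 - γ)).PosDef := phi_posDef hAc hBc γ
  have hQd : (hpow (t • A₁ + (1 - t) • A₂) δ
      ⊗ₖ hpow (t • B₁ + (1 - t) • B₂) (1 - δ)).PosDef := phi_posDef hAc hBc δ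
  have hPgc : (t • (hpow A₁ γ ⊗ₖ hpow B₁ (1 - γ))
      + (1 - t) • (hpow A₂ γ ⊗ₖ hpow B₂ (1 - γ))).PosDef := convex_posDef hPg1 hPg2 ht0 ht1
  have hPdc : (t • (hpow A₁ δ ⊗ₖ hpow B₁ (1 - δ))
      + (1 - t) • (hpow A₂ δ ⊗ₖ hpow B₂ (1 - δ))).PosDef := convex_posDef hPd1 hPd2 ht0 ht1
  -- step 1: concavity of gmean
  have st1 := gmean_concave hPg1 hPg2 hPd1 hPd2 ht0 ht1
  rw [phi_gmean hA₁ hB₁ γ δ, phi_gmean hA₂ hB₂ γ δ] at st1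
  -- step 2: monotonicity of gmean
  have st2 := gmean_mono hPgc hQg hPdc hQd (hγ d A₁ A₂ B₁ B₂ hA₁ hA₂ hB₁ hB₂ t ht0 ht1)
    (hδ d A₁ A₂ B₁ B₂ hA₁ hA₂ hB₁ hB₂ t ht0 ht1)
  rw [phi_gmean hAc hBc γ δ] at st2
  exact lle_trans st1 st2

lemma good_dyadic : ∀ (k m : ℕ), m ≤ 2 ^ k → Good ((m : ℝ) / 2 ^ k) := by
  intro k
  induction k with
  | zero =>
    intro m hm
    interval_cases m
    · simpa using good_zero
    · simpa using good_one
  | succ k ih =>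
    intro m hm
    rcases Nat.even_or_odd m with ⟨j, hj⟩ | ⟨j, hj⟩
    · have hjle : j ≤ 2 ^ k := by omega
      have : ((m : ℝ) / 2 ^ (k + 1)) = (j : ℝ) / 2 ^ k := by
        subst hj
        push_cast
        field_simp
        ring
      rw [this]
      exact ih j hjle
    · have hjle : j ≤ 2 ^ k := by omega
      have hjle' : j + 1 ≤ 2 ^ k := by omega
      have : ((m : ℝ) / 2 ^ (k + 1)) = ((j : ℝ) / 2 ^ k + ((j : ℝ) + 1) / 2 ^ k) / 2 := by
        subst hj
        have h2 : (2:ℝ) ^ k ≠ 0 := by positivity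
        push_cast
        field_simp
        ring
      rw [this]
      have := good_mid (ih j hjle) (ih (j + 1) hjle')
      convert this using 2
      push_cast
      ring

/-! ### continuity in the exponent -/

lemma hpow_eq {M : Matrix n n ℂ} (hM : M.IsHermitian) (s : ℝ) :
    hpow M s = (hM.eigenvectorUnitary : Matrix n n ℂ) *
      Matrix.diagonal (fun i => ((hM.eigenvalues i ^ s : ℝ) : ℂ)) *
      star (hM.eigenvectorUnitary : Matrix n n ℂ) := by
  rw [AndoLieb.hpow, dif_pos hM]

lemma continuous_hpow {M : Matrix n n ℂ} (hM : M.PosDef) :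
    Continuous fun s : ℝ => hpow M s := by
  have heq : (fun s : ℝ => hpow M s) = fun s =>
      (hM.1.eigenvectorUnitary : Matrix n n ℂ) *
      Matrix.diagonal (fun i => ((hM.1.eigenvalues i ^ s : ℝ) : ℂ)) *
      star (hM.1.eigenvectorUnitary : Matrix n n ℂ) := funext (hpow_eq hM.1)
  rw [heq]
  refine (continuous_const.matrix_mul ?_).matrix_mul continuous_const
  refine Continuous.matrix_diagonal ?_
  refine continuous_pi fun i => Complex.continuous_ofReal.comp ?_
  exact (Real.continuous_exp.comp (continuous_const.mul continuous_id)).congr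
    fun s => (Real.rpow_def_of_pos (hM.eigenvalues_pos i) s).symm

lemma continuous_kron {m : Type*} [Fintype m] [DecidableEq m]
    {X : ℝ → Matrix n n ℂ} {Y : ℝ → Matrix m m ℂ}
    (hX : Continuous X) (hY : Continuous Y) : Continuous fun s => X s ⊗ₖ Y s := by
  refine continuous_matrix fun p q => ?_
  show Continuous fun s => X s p.1 q.1 * Y s p.2 q.2
  exact (hX.matrix_elem p.1 q.1).mul (hY.matrix_elem p.2 q.2)

lemma kron_herm {m : Type*} [Fintype m] [DecidableEq m]
    {X : Matrix n n ℂ} {Y : Matrix m m ℂ} (hX : X.IsHermitian) (hY : Y.IsHermitian) :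
    (X ⊗ₖ Y).IsHermitian := by
  rw [Matrix.IsHermitian, ← Matrix.star_eq_conjTranspose, star_kron,
    Matrix.star_eq_conjTranspose, Matrix.star_eq_conjTranspose, hX.eq, hY.eq]

lemma herm_dotProduct_self_conj {M : Matrix n n ℂ} (hM : M.IsHermitian) (x : n → ℂ) :
    star (star x ⬝ᵥ (M *ᵥ x)) = star x ⬝ᵥ (M *ᵥ x) := by
  have e1 := star_dotProduct_star (M *ᵥ x) (star x)
  rw [star_star] at e1
  rw [← e1, Matrix.star_mulVec, hM.eq, ← Matrix.dotProduct_mulVec]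

end AndoLieb

open AndoLieb in
/-- **Ando–Lieb theorem.**  Fix `γ ∈ (0,1)`.  For all `d × d` Hermitian positive definite
complex matrices `A₁, A₂, B₁, B₂` and every `t ∈ [0,1]`,
`(t A₁ + (1−t) A₂)^γ ⊗ (t B₁ + (1−t) B₂)^{1−γ} ⪰ t (A₁^γ ⊗ B₁^{1−γ}) + (1−t) (A₂^γ ⊗ B₂^{1−γ})`,
i.e. the map `(A, B) ↦ A^γ ⊗ B^{1−γ}` is jointly concave w.r.t. the Löwner order. -/
theorem ando_lieb {d : ℕ} (γ : ℝ) (hγ : γ ∈ Set.Ioo (0 : ℝ) 1)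
    (A₁ A₂ B₁ B₂ : Matrix (Fin d) (Fin d) ℂ)
    (hA₁ : A₁.PosDef) (hA₂ : A₂.PosDef) (hB₁ : B₁.PosDef) (hB₂ : B₂.PosDef)
    (t : ℝ) (ht : t ∈ Set.Icc (0 : ℝ) 1) :
    (mpow (t • A₁ + (1 - t) • A₂) γ ⊗ₖ mpow (t • B₁ + (1 - t) • B₂) (1 - γ)
      - (t • (mpow A₁ γ ⊗ₖ mpow B₁ (1 - γ)) + (1 - t) • (mpow A₂ γ ⊗ₖ mpow B₂ (1 - γ)))).PosSemidef := by
  obtain ⟨hγ0, hγ1⟩ := hγ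
  obtain ⟨ht0, ht1⟩ := ht
  simp only [mpow_eq_hpow]
  have hAc : (t • A₁ + (1 - t) • A₂).PosDef := convex_posDef hA₁ hA₂ ht0 ht1
  have hBc : (t • B₁ + (1 - t) • B₂).PosDef := convex_posDef hB₁ hB₂ ht0 ht1
  set F : ℝ → Matrix (Fin d × Fin d) (Fin d × Fin d) ℂ := fun s =>
    (hpow (t • A₁ + (1 - t) • A₂) s ⊗ₖ hpow (t • B₁ + (1 - t) • B₂) (1 - s))
      - (t • (hpow A₁ s ⊗ₖ hpow B₁ (1 - s))
        + (1 - t) • (hpow A₂ s ⊗ₖ hpow B₂ (1 - s))) with hFdef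
  show (F γ).PosSemidef
  -- continuity of F
  have hrev : Continuous fun s : ℝ => 1 - s := continuous_const.sub continuous_id
  have hFcont : Continuous F := by
    rw [hFdef]
    refine Continuous.sub ?_ (Continuous.add ?_ ?_)
    · exact continuous_kron (continuous_hpow hAc) ((continuous_hpow hBc).comp hrev)
    · exact Continuous.const_smul
        (continuous_kron (continuous_hpow hA₁) ((continuous_hpow hB₁).comp hrev)) t
    · exact Continuous.const_smul
        (continuous_kron (continuous_hpow hA₂) ((continuous_hpow hB₂).comp hrev)) (1 - t)
  -- the dyadic approximating sequence
  set q : ℕ → ℝ := fun k => (⌊γ * 2 ^ k⌋₊ : ℝ) / 2 ^ k with hqdef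
  have h2k : ∀ k : ℕ, (0:ℝ) < 2 ^ k := fun k => by positivity
  have hqgood : ∀ k, Good (q k) := by
    intro k
    have hle : ⌊γ * 2 ^ k⌋₊ ≤ 2 ^ k := by
      have h1 : (⌊γ * 2 ^ k⌋₊ : ℝ) ≤ γ * 2 ^ k := Nat.floor_le (by positivity)
      have h2 : γ * 2 ^ k < 2 ^ k := by nlinarith [h2k k]
      have h3 : (⌊γ * 2 ^ k⌋₊ : ℝ) < ((2 ^ k : ℕ) : ℝ) := by push_cast; linarith
      exact_mod_cast h3.le
    have := good_dyadic k ⌊γ * 2 ^ k⌋₊ hle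
    simpa [hqdef] using this
  have htend : Filter.Tendsto q Filter.atTop (nhds γ) := by
    have hlow : ∀ k, γ - (1/2 : ℝ) ^ k ≤ q k := by
      intro k
      have h1 : γ * 2 ^ k < ⌊γ * 2 ^ k⌋₊ + 1 := Nat.lt_floor_add_one _
      have hpow1 : (1/2 : ℝ) ^ k * 2 ^ k = 1 := by
        rw [← mul_pow]
        norm_num
      have hmain : (γ - (1/2 : ℝ) ^ k) * 2 ^ k ≤ (⌊γ * 2 ^ k⌋₊ : ℝ) := by nlinarith
      show γ - (1/2 : ℝ) ^ k ≤ (⌊γ * 2 ^ k⌋₊ : ℝ) / 2 ^ k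
      rw [le_div_iff₀ (h2k k)]
      exact hmain
    have hhigh : ∀ k, q k ≤ γ := by
      intro k
      show (⌊γ * 2 ^ k⌋₊ : ℝ) / 2 ^ k ≤ γ
      rw [div_le_iff₀ (h2k k)]
      exact Nat.floor_le (by positivity)
    have hl : Filter.Tendsto (fun k : ℕ => γ - (1/2 : ℝ) ^ k) Filter.atTop (nhds γ) := by
      have := tendsto_pow_atTop_nhds_zero_of_lt_one (by norm_num : (0:ℝ) ≤ 1/2)
        (by norm_num : (1/2:ℝ) < 1)
      have := Filter.Tendsto.const_sub γ this
      simpa using this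
    exact tendsto_of_tendsto_of_tendsto_of_le_of_le hl tendsto_const_nhds hlow hhigh
  have hFq : Filter.Tendsto (fun k => F (q k)) Filter.atTop (nhds (F γ)) :=
    (hFcont.tendsto γ).comp htend
  -- Hermitian part
  have hherm : (F γ).IsHermitian := by
    rw [hFdef]
    refine Matrix.IsHermitian.sub ?_ ?_
    · exact kron_herm (hpow_herm hAc.1 _) (hpow_herm hBc.1 _)
    · exact convex_herm (kron_herm (hpow_herm hA₁.1 _) (hpow_herm hB₁.1 _))
        (kron_herm (hpow_herm hA₂.1 _) (hpow_herm hB₂.1 _)) t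
  refine Matrix.PosSemidef.of_dotProduct_mulVec_nonneg hherm fun x => ?_
  set L : ℂ := star x ⬝ᵥ (F γ *ᵥ x) with hLdef
  have hLτ : Filter.Tendsto (fun k => star x ⬝ᵥ (F (q k) *ᵥ x)) Filter.atTop (nhds L) := by
    have hc : Continuous fun s => star x ⬝ᵥ (F s *ᵥ x) :=
      continuous_const.dotProduct (hFcont.matrix_mulVec continuous_const)
    exact (hc.tendsto γ).comp htend
  have hnonneg : ∀ k, (0:ℂ) ≤ star x ⬝ᵥ (F (q k) *ᵥ x) := by
    intro k
    exact (hqgood k d A₁ A₂ B₁ B₂ hA₁ hA₂ hB₁ hB₂ t ht0 ht1).dotProduct_mulVec_nonneg x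
  have hre : 0 ≤ L.re := by
    have hretend : Filter.Tendsto (fun k => (star x ⬝ᵥ (F (q k) *ᵥ x)).re)
        Filter.atTop (nhds L.re) := (Complex.continuous_re.tendsto L).comp hLτ
    refine ge_of_tendsto hretend (Filter.Eventually.of_forall fun k => ?_)
    have := hnonneg k
    rw [Complex.le_def] at this
    simpa using this.1
  have him : L.im = 0 := by
    have := herm_dotProduct_self_conj hherm x
    rw [← hLdef] at this
    exact Complex.conj_eq_iff_im.mp this
  rw [Complex.le_def]
  constructor
  · simpa using hre
  · simp [him]
end
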